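/- Let φ = (1+√5)/2 and define L = {(k,n) ∈ ℤ² : 0 ≤ k, 0 ≤ n, k/φ < n < φ·k} ∪ {(0,0)} and W as its complement among pairs of non-negative integers. Then: (1) for every (k,n) ∈ W with (k,n) ≠ (0,0) and k ≤ n, either there is a legal move to a position in L; (2) from every (k,n) ∈ L with (k,n) ≠ (0,0), every legal move leads to a position in W; where a legal move from (a,b) with a ≤ b removes from one heap a positive multiple of a or of b (not exceeding that heap's size). -/

import Mathlib

noncomputable def phi : ℝ := (1 + Real.sqrt 5) / 2

/-- A legal move in the two-heaps game: from `p = (a, b)` one removes a positive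
number of tokens that is a (positive) multiple of `a` or of `b` from one of the heaps. -/
def Move (p q : ℕ × ℕ) : Prop :=
  ∃ m : ℕ, 0 < m ∧
    ((0 < m * p.1 ∧ m * p.1 ≤ p.1 ∧ q = (p.1 - m * p.1, p.2)) ∨
     (0 < m * p.1 ∧ m * p.1 ≤ p.2 ∧ q = (p.1, p.2 - m * p.1)) ∨
     (0 < m * p.2 ∧ m * p.2 ≤ p.1 ∧ q = (p.1 - m * p.2, p.2)) ∨
     (0 < m * p.2 ∧ m * p.2 ≤ p.2 ∧ q = (p.1, p.2 - m * p.2)))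

theorem Move.sum_lt {p q : ℕ × ℕ} (h : Move p q) : q.1 + q.2 < p.1 + p.2 := by
  obtain ⟨m, hm, h⟩ := h
  rcases h with ⟨h1, h2, rfl⟩ | ⟨h1, h2, rfl⟩ | ⟨h1, h2, rfl⟩ | ⟨h1, h2, rfl⟩ <;> dsimp only <;> omega

/-- `Win p` holds iff the player to move from `p` wins: there is a legal move to a
position from which the player to move loses.  In particular `Win (0,0)` is false. -/
def Win (p : ℕ × ℕ) : Prop :=
  ∃ q, ∃ _ : Move p q, ¬ Win q
termination_by p.1 + p.2
decreasing_by exact Move.sum_lt ‹Move _ _›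

/-- The losing zone: `(0,0)` together with the positions `(k,n)` with `k/φ < n < φ·k`. -/
def Lzone (p : ℕ × ℕ) : Prop :=
  p = (0, 0) ∨ ((p.1 : ℝ) / phi < (p.2 : ℝ) ∧ (p.2 : ℝ) < phi * p.1)

/-- Normalization of an unordered pair of heaps. -/
def norm (p : ℕ × ℕ) : ℕ × ℕ := (min p.1 p.2, max p.1 p.2)

lemma phi_pos : 0 < phi := Real.goldenRatio_pos
lemma phi_gt_one : 1 < phi := Real.one_lt_goldenRatio
lemma phi_sq : phi * phi = phi + 1 := by
  have := Real.goldenRatio_sq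
  rw [sq] at this
  exact this

lemma irrational_phi : Irrational phi := Real.goldenRatio_irrational

lemma nat_ne_phi_mul {a b : ℕ} (hb : 0 < b) : (a : ℝ) ≠ phi * b := by
  intro h
  have hb' : (b : ℝ) ≠ 0 := by positivity
  have hphi : phi = (a : ℝ) / b := by field_simp; linarith [h]
  have h2 : Irrational ((a : ℝ) / b) := hphi ▸ irrational_phi
  have h3 : (((a : ℚ) / (b : ℚ) : ℚ) : ℝ) = (a : ℝ) / b := by push_cast; ring
  exact Rat.not_irrational _ (h3 ▸ h2)

/-- Characterization of `Lzone ∘ norm` in symmetric form. -/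
lemma lzone_norm_iff (a b : ℕ) :
    Lzone (norm (a, b)) ↔ ((a = 0 ∧ b = 0) ∨ ((a : ℝ) < phi * b ∧ (b : ℝ) < phi * a)) := by
  have hp := phi_pos
  rcases le_total a b with h | h
  · rw [show norm (a, b) = (a, b) from by simp [_root_.norm, h]]
    unfold Lzone
    constructor
    · rintro (he | ⟨h1, h2⟩)
      · left; exact ⟨congrArg Prod.fst he, congrArg Prod.snd he⟩
      · right
        refine ⟨?_, by simpa using h2⟩
        have := (div_lt_iff₀ hp).mp h1
        simpa [mul_comm] using this
    · rintro (⟨rfl, rfl⟩ | ⟨h1, h2⟩)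
      · left; rfl
      · right
        refine ⟨(div_lt_iff₀ hp).mpr (by simpa [mul_comm] using h1), by simpa using h2⟩
  · rw [show norm (a, b) = (b, a) from by simp [_root_.norm, h]]
    unfold Lzone
    constructor
    · rintro (he | ⟨h1, h2⟩)
      · left; exact ⟨congrArg Prod.snd he, congrArg Prod.fst he⟩
      · right
        refine ⟨by simpa using h2, ?_⟩
        have := (div_lt_iff₀ hp).mp h1
        simpa [mul_comm] using this
    · rintro (⟨rfl, rfl⟩ | ⟨h1, h2⟩)
      · left; rfl
      · right
        refine ⟨(div_lt_iff₀ hp).mpr (by simpa [mul_comm] using h2), by simpa using h1⟩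

lemma floor_lt_div_phi {k : ℕ} (hk : 0 < k) :
    ((Nat.floor ((k : ℝ) / phi) : ℝ)) < (k : ℝ) / phi := by
  have hp := phi_pos
  have hknn : (0 : ℝ) ≤ (k : ℝ) / phi := by positivity
  rcases lt_or_eq_of_le (Nat.floor_le hknn) with h | h
  · exact h
  · exfalso
    set f := Nat.floor ((k : ℝ) / phi) with hf
    have hkf : (k : ℝ) = phi * f := by
      rw [h]; field_simp
    have hf0 : 0 < f := by
      by_contra h0
      push_neg at h0
      interval_cases f
      · simp at hkf
        exact absurd hkf (by positivity)
    exact nat_ne_phi_mul hf0 hkf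

theorem W_to_L_and_L_to_W :
    (∀ k n : ℕ, k ≤ n → (k, n) ≠ (0, 0) → ¬ Lzone (k, n) →
      ∃ q, Move (k, n) q ∧ Lzone (norm q)) ∧
    (∀ k n : ℕ, Lzone (k, n) → (k, n) ≠ (0, 0) →
      ∀ q, Move (k, n) q → ¬ Lzone (norm q)) := by
  have hp := phi_pos
  have hp1 := phi_gt_one
  have hps := phi_sq
  constructor
  · -- W → L
    intro k n hkn hne hW
    rcases Nat.eq_zero_or_pos k with rfl | hk
    · -- k = 0, n > 0 : remove the whole second heap
      have hn : 0 < n := by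
        rcases Nat.eq_zero_or_pos n with rfl | h
        · exact absurd rfl hne
        · exact h
      refine ⟨(0, 0), ⟨1, one_pos, Or.inr (Or.inr (Or.inr ?_))⟩, ?_⟩
      · exact ⟨by simpa using hn, by simp, by simp⟩
      · exact Or.inl rfl
    · -- k > 0
      have hkR : (1 : ℝ) ≤ (k : ℝ) := by exact_mod_cast hk
      have hknR : (k : ℝ) ≤ (n : ℝ) := by exact_mod_cast hkn
      have hlow : (k : ℝ) / phi < (n : ℝ) := by
        have : (k : ℝ) / phi < (k : ℝ) := div_lt_self (by linarith) hp1
        linarith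
      have hhigh : phi * (k : ℝ) ≤ (n : ℝ) := by
        by_contra h
        push_neg at h
        exact hW (Or.inr ⟨hlow, h⟩)
      set f := Nat.floor ((k : ℝ) / phi) with hfd
      have hfl : (f : ℝ) < (k : ℝ) / phi := floor_lt_div_phi hk
      have hfu : (k : ℝ) / phi < (f : ℝ) + 1 := Nat.lt_floor_add_one _
      have hsplit : (k : ℝ) / phi = phi * (k : ℝ) - (k : ℝ) := by
        rw [div_eq_iff (ne_of_gt hp)]
        linear_combination (-(k : ℝ)) * hps
      -- n > f + k as naturals
      have hfkn : f + k < n := by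
        have : ((f + k : ℕ) : ℝ) < (n : ℝ) := by push_cast; linarith
        exact_mod_cast this
      obtain ⟨m, r, hr, hd⟩ : ∃ m r : ℕ, r < k ∧ n - (f + 1) = k * m + r :=
        ⟨(n - (f + 1)) / k, (n - (f + 1)) % k, Nat.mod_lt _ hk, (Nat.div_add_mod _ k).symm⟩
      have hm1 : 0 < m := by
        rcases Nat.eq_zero_or_pos m with rfl | h
        · simp at hd; omega
        · exact h
      have hn_eq : n = k * m + (f + 1 + r) := by
        have h2 : f + 1 ≤ n := by omega
        zify [h2] at hd
        zify
        linarith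
      set t := f + 1 + r with htd
      have hmk_le : m * k ≤ n := by
        rw [hn_eq, mul_comm]; omega
      have hsub : n - m * k = t := by rw [hn_eq, mul_comm]; omega
      refine ⟨(k, n - m * k), ⟨m, hm1, Or.inr (Or.inl ⟨Nat.mul_pos hm1 hk, hmk_le, rfl⟩)⟩, ?_⟩
      rw [hsub, lzone_norm_iff]
      right
      constructor
      · -- k < phi * t, from k/phi < f+1 ≤ t
        have h1 : (k : ℝ) / phi < (t : ℝ) := by
          have : ((f : ℝ) + 1) ≤ (t : ℝ) := by push_cast [htd]; linarith [Nat.cast_nonneg (α := ℝ) r]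
          linarith
        have := (div_lt_iff₀ hp).mp h1
        linarith [this]
      · -- t < phi * k, since t ≤ f + k < k/phi + k = phi*k
        have h1 : (t : ℝ) ≤ (f : ℝ) + (k : ℝ) := by
          push_cast [htd]
          have : (r : ℝ) + 1 ≤ (k : ℝ) := by exact_mod_cast hr
          linarith
        linarith
  · -- L → W
    intro k n hL hne q hq
    have hLkn : (k : ℝ) / phi < (n : ℝ) ∧ (n : ℝ) < phi * k := by
      rcases hL with h | h
      · exact absurd h hne
      · exact h
    obtain ⟨hl, hh⟩ := hLkn
    have hk : 0 < k := by
      by_contra h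
      push_neg at h
      interval_cases k
      · simp at hh
        have : (0 : ℝ) ≤ (n : ℝ) := Nat.cast_nonneg n
        linarith
    have hn : 0 < n := by
      by_contra h
      push_neg at h
      interval_cases n
      · have : (0 : ℝ) ≤ (k : ℝ) / phi := by positivity
        simp at hl
        linarith
    have hkR : (1 : ℝ) ≤ (k : ℝ) := by exact_mod_cast hk
    have hnR : (1 : ℝ) ≤ (n : ℝ) := by exact_mod_cast hn
    have hl' : (k : ℝ) < phi * n := by
      have := (div_lt_iff₀ hp).mp hl
      linarith [this]
    obtain ⟨m, hm, H⟩ := hq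
    have hmR : (1 : ℝ) ≤ (m : ℝ) := by exact_mod_cast hm
    rcases H with ⟨h1, h2, rfl⟩ | ⟨h1, h2, rfl⟩ | ⟨h1, h2, rfl⟩ | ⟨h1, h2, rfl⟩ <;>
        dsimp only at * <;> rw [lzone_norm_iff] <;> intro hc
    · -- q = (k - m*k, n) = (0, n)
      have hz : k - m * k = 0 := by
        have : k ≤ m * k := Nat.le_mul_of_pos_left k hm
        omega
      rw [hz] at hc
      rcases hc with ⟨_, h0⟩ | ⟨_, h0⟩
      · omega
      · simp at h0
        linarith
    · -- q = (k, n - m*k) : second coordinate < k/phi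
      rcases hc with ⟨h0, _⟩ | ⟨h0, _⟩
      · omega
      · rw [Nat.cast_sub h2] at h0
        push_cast at h0
        nlinarith [hh, hps, hmR, hkR, hp]
    · -- q = (k - m*n, n) : first coordinate < n/phi
      rcases hc with ⟨_, h0⟩ | ⟨_, h0⟩
      · omega
      · rw [Nat.cast_sub h2] at h0
        push_cast at h0
        nlinarith [hl', hps, hmR, hnR, hp]
    · -- q = (k, n - m*n) = (k, 0)
      have hz : n - m * n = 0 := by
        have : n ≤ m * n := Nat.le_mul_of_pos_left n hm
        omega
      rw [hz] at hc
      rcases hc with ⟨h0, _⟩ | ⟨h0, _⟩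
      · omega
      · simp at h0
        linarith
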